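/- Let G = (U ∪ V, E) be a bipartite graph in which every vertex of U has degree at least 1 and at most 3. Fix l ≥ 1 and an injective assignment v ↦ x_v of distinct strings x_v of length l over {A, T} to the vertices v ∈ V, and let X = {x_v : v ∈ V} be the probe set. For each u ∈ U, let p_u be the primer obtained by concatenating the Watson-Crick complements comp(x_v) for v ∈ N(u) (in some fixed order) with a single letter C inserted between consecutive blocks, and set E_{p_u} = {G, C}. Then the maximum size of an induced matching in G (i.e., the maximum cardinality |U'| over pairs U' ⊆ U, V' ⊆ V with |U'| = |V'| whose induced subgraph is a matching) equals the maximum cardinality of a subset U' ⊆ U such that {p_u : u ∈ U'} is strongly 1-decodable with respect to X and the extension sets E_{p_u} = {G, C}. -/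

import Mathlib

/-- The DNA alphabet Σ = {A, C, G, T}. -/
inductive Base : Type
  | A | C | G | T
  deriving DecidableEq

/-- Watson-Crick complement of a single base: A ↔ T, C ↔ G. -/
def Base.comp : Base → Base
  | A => T
  | T => A
  | C => G
  | G => C

/-- Watson-Crick complement of a string. -/
def compStr (w : List Base) : List Base := w.map Base.comp

/-- The spectrum `Spec_X(y)`: the probes `x ∈ X` whose Watson-Crick complement is a
contiguous substring (infix) of `y`. -/
def Spec (X : Finset (List Base)) (y : List Base) : Finset (List Base) :=
  X.filter (fun x => compStr x <:+: y)

/-- `Spec_X(p, E) = ⋃_{e ∈ E} Spec_X(p·e)`. -/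
def SpecE (X : Finset (List Base)) (p : List Base) (E : Finset Base) : Finset (List Base) :=
  E.biUnion (fun e => Spec X (p ++ [e]))

/-- A family of primers `p i`, `i ∈ S`, with extension sets `E i`, is strongly
`r`-decodable with respect to the probe set `X` if for every `i ∈ S` the set
`Spec_X(p i) \ ⋃_{j ∈ S, j ≠ i} Spec_X(p j, E j)` has at least `r` elements. -/
def StronglyDecodableFam {ι : Type} [DecidableEq ι] (X : Finset (List Base))
    (S : Finset ι) (p : ι → List Base) (E : ι → Finset Base) (r : ℕ) : Prop :=
  ∀ i ∈ S, r ≤ ((Spec X (p i)) \ ((S.erase i).biUnion (fun j => SpecE X (p j) (E j)))).card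

section Aux

variable {α : Type*}

lemma split_infix {w u v : List α} (h : w <:+: u ++ v) :
    w <:+: u ∨ w <:+: v ∨ ∃ w₁ w₂, w = w₁ ++ w₂ ∧ w₁ <:+ u ∧ w₂ <+: v ∧ w₂ ≠ [] := by
  obtain ⟨a, b, hab⟩ := h
  rcases le_or_gt (a.length + w.length) u.length with h1 | h1
  · left
    have h3 : ((a ++ w) ++ b).take (a.length + w.length) = a ++ w :=
      List.take_left' (by simp)
    rw [hab, List.take_append, Nat.sub_eq_zero_of_le h1, List.take_zero,
      List.append_nil] at h3
    refine ⟨a, u.drop (a.length + w.length), ?_⟩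
    conv_rhs => rw [← List.take_append_drop (a.length + w.length) u]
    rw [h3, List.append_assoc]
  rcases le_or_gt u.length a.length with h2 | h2
  · right; left
    have h3 : (u ++ v).drop u.length = a.drop u.length ++ (w ++ b) := by
      rw [← hab, List.append_assoc, List.drop_append,
        Nat.sub_eq_zero_of_le h2, List.drop_zero]
    rw [List.drop_left] at h3
    exact ⟨a.drop u.length, b, by rw [List.append_assoc, ← h3]⟩
  · right; right
    have ht : a ++ w.take (u.length - a.length) = u := by
      calc a ++ w.take (u.length - a.length)
          = (a ++ w).take u.length := by
            rw [List.take_append, List.take_of_length_le h2.le]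
        _ = ((a ++ w) ++ b).take u.length :=
            (List.take_append_of_le_length (by simp; omega)).symm
        _ = (u ++ v).take u.length := by rw [hab]
        _ = u := List.take_left' rfl
    have hd : w.drop (u.length - a.length) ++ b = v := by
      calc w.drop (u.length - a.length) ++ b
          = (a ++ w).drop u.length ++ b := by
            rw [List.drop_append, List.drop_of_length_le h2.le,
              List.nil_append]
        _ = ((a ++ w) ++ b).drop u.length := by
            rw [List.drop_append (l₁ := a ++ w),
              Nat.sub_eq_zero_of_le (by simp; omega), List.drop_zero]
        _ = (u ++ v).drop u.length := by rw [hab]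
        _ = v := List.drop_left (l₁ := u) (l₂ := v)
    refine ⟨w.take (u.length - a.length), w.drop (u.length - a.length),
      (List.take_append_drop _ _).symm, ⟨a, ht⟩, ⟨b, hd⟩, ?_⟩
    have hlen : (w.drop (u.length - a.length)).length = w.length - (u.length - a.length) := by
      simp
    intro hnil
    rw [hnil] at hlen
    simp at hlen
    omega

lemma infix_cons_out {w v : List α} {c : α} (h : w <:+: c :: v) (hc : c ∉ w) : w <:+: v := by
  obtain ⟨a, b, hab⟩ := h
  cases a with
  | nil =>
    cases w with
    | nil => exact List.nil_infix
    | cons y w' =>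
      simp at hab
      rw [hab.1] at hc
      simp at hc
  | cons y a' =>
    simp at hab
    exact ⟨a', b, by rw [List.append_assoc]; exact hab.2⟩

lemma infix_mid {w u v : List α} {c : α} (h : w <:+: u ++ c :: v) (hc : c ∉ w) :
    w <:+: u ∨ w <:+: v := by
  rcases split_infix h with h1 | h1 | ⟨w₁, w₂, rfl, _, hw2, hne⟩
  · exact Or.inl h1
  · exact Or.inr (infix_cons_out h1 hc)
  · exfalso
    cases w₂ with
    | nil => exact hne rfl
    | cons y w₂' =>
      have : c = y := by
        obtain ⟨t, ht⟩ := hw2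
        simpa using congrArg (fun l => l.head?) ht.symm
      exact hc (by simp [← this])

lemma infix_snoc_out {w y : List α} {e : α} (h : w <:+: y ++ [e]) (he : e ∉ w) : w <:+: y := by
  have heq : y ++ [e] = y ++ e :: [] := rfl
  rw [heq] at h
  rcases infix_mid h he with h1 | h1
  · exact h1
  · rw [List.eq_nil_of_infix_nil h1]; exact List.nil_infix
end Aux

lemma mem_of_infix_intercalate {l : ℕ} (hl : 1 ≤ l) :
    ∀ (bs : List (List Base)) (w : List Base), (∀ b ∈ bs, b.length = l) →
      w.length = l → Base.C ∉ w → w <:+: List.intercalate [Base.C] bs → w ∈ bs := by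
  intro bs
  induction bs with
  | nil =>
    intro w _ hw _ hinf
    rw [show List.intercalate [Base.C] [] = [] by simp [List.intercalate]] at hinf
    rw [List.eq_nil_of_infix_nil hinf] at hw
    simp at hw; omega
  | cons b t ih =>
    intro w hbs hw hc hinf
    cases t with
    | nil =>
      rw [show List.intercalate [Base.C] [b] = b by simp [List.intercalate]] at hinf
      have := hinf.sublist.eq_of_length (by rw [hw, hbs b (by simp)])
      simp [this]
    | cons b' t' =>
      rw [show List.intercalate [Base.C] (b :: b' :: t')
          = b ++ Base.C :: List.intercalate [Base.C] (b' :: t') by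
          simp [List.intercalate]] at hinf
      rcases infix_mid hinf hc with h1 | h1
      · have := h1.sublist.eq_of_length (by rw [hw, hbs b (by simp)])
        simp [this]
      · exact List.mem_cons_of_mem _
          (ih w (fun y hy => hbs y (by simp [hy])) hw hc h1)

lemma infix_intercalate_of_mem (bs : List (List Base)) (b : List Base) (hb : b ∈ bs) :
    b <:+: List.intercalate [Base.C] bs := by
  induction bs with
  | nil => simp at hb
  | cons b0 t ih =>
    cases t with
    | nil =>
      simp at hb
      rw [hb, show List.intercalate [Base.C] [b0] = b0 by simp [List.intercalate]]
    | cons b' t' =>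
      rw [show List.intercalate [Base.C] (b0 :: b' :: t')
          = b0 ++ Base.C :: List.intercalate [Base.C] (b' :: t') by simp [List.intercalate]]
      rcases List.mem_cons.1 hb with rfl | hb'
      · exact (List.prefix_append b (Base.C :: _)).isInfix
      · exact (ih hb').trans
          (((List.suffix_cons Base.C _).trans (List.suffix_append _ _)).isInfix)

lemma comp_invol : Function.Involutive Base.comp := by
  intro b; cases b <;> rfl

lemma compStr_inj : Function.Injective compStr :=
  List.map_injective_iff.2 comp_invol.injective


/-- The maximum size of an induced matching in the bipartite graph equals the maximum
cardinality of a subset `U' ⊆ U` such that the primers `{p_u : u ∈ U'}` (with extension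
sets `{G, C}`) are strongly 1-decodable w.r.t. `X`. -/
theorem stmt5 {U V : Type} [Fintype U] [Fintype V] [DecidableEq U] [DecidableEq V]
    (nbrs : U → List V)
    (hnodup : ∀ u, (nbrs u).Nodup)
    (hdeg : ∀ u, 1 ≤ (nbrs u).length ∧ (nbrs u).length ≤ 3)
    (l : ℕ) (hl : 1 ≤ l)
    (x : V → List Base) (hinj : Function.Injective x)
    (hx : ∀ v, (x v).length = l ∧ ∀ b ∈ x v, b = Base.A ∨ b = Base.T)
    (X : Finset (List Base)) (hX : ∀ w, w ∈ X ↔ ∃ v, x v = w)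
    (p : U → List Base)
    (hp : ∀ u, p u = List.intercalate [Base.C] ((nbrs u).map (fun v => compStr (x v)))) :
    sSup {k : ℕ | ∃ (U' : Finset U) (V' : Finset V), U'.card = k ∧ V'.card = k ∧
        (∀ u ∈ U', ∃! v, v ∈ V' ∧ v ∈ nbrs u) ∧
        (∀ v ∈ V', ∃! u, u ∈ U' ∧ v ∈ nbrs u)} =
    sSup {k : ℕ | ∃ U' : Finset U, U'.card = k ∧
        StronglyDecodableFam X U' p (fun _ => ({Base.G, Base.C} : Finset Base)) 1} := by
  -- basic facts about the probe complements
  have hxl : ∀ v, (compStr (x v)).length = l := fun v => by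
    simp [compStr, (hx v).1]
  have hxmem : ∀ v b, b ∈ compStr (x v) → b = Base.T ∨ b = Base.A := by
    intro v b hb
    simp only [compStr, List.mem_map] at hb
    obtain ⟨c, hc, rfl⟩ := hb
    rcases (hx v).2 c hc with rfl | rfl
    · exact Or.inl rfl
    · exact Or.inr rfl
  have hxC : ∀ v, Base.C ∉ compStr (x v) := by
    intro v hmem
    rcases hxmem v _ hmem with h | h <;> exact Base.noConfusion h
  have hxG : ∀ v, Base.G ∉ compStr (x v) := by
    intro v hmem
    rcases hxmem v _ hmem with h | h <;> exact Base.noConfusion h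
  -- characterization of the spectrum of a primer
  have hspec : ∀ u w, w ∈ Spec X (p u) ↔ ∃ v ∈ nbrs u, x v = w := by
    intro u w
    simp only [Spec, Finset.mem_filter, hX, hp]
    constructor
    · rintro ⟨⟨v, rfl⟩, hinf⟩
      have hblocks : ∀ b ∈ (nbrs u).map (fun v => compStr (x v)), b.length = l := by
        intro b hb
        simp only [List.mem_map] at hb
        obtain ⟨v', _, rfl⟩ := hb
        exact hxl v'
      have hmem := mem_of_infix_intercalate hl _ _ hblocks (hxl v) (hxC v) hinf
      simp only [List.mem_map] at hmem
      obtain ⟨v', hv', heq⟩ := hmem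
      exact ⟨v', hv', compStr_inj heq⟩
    · rintro ⟨v, hv, rfl⟩
      exact ⟨⟨v, rfl⟩, infix_intercalate_of_mem _ _ (List.mem_map_of_mem hv)⟩
  -- the extension spectra coincide with the plain spectra
  have hspecE : ∀ u, SpecE X (p u) {Base.G, Base.C} = Spec X (p u) := by
    intro u
    ext w
    simp only [SpecE, Finset.mem_biUnion, Finset.mem_insert, Finset.mem_singleton]
    constructor
    · rintro ⟨e, he, hw⟩
      simp only [Spec, Finset.mem_filter, hX] at hw ⊢
      obtain ⟨⟨v, rfl⟩, hinf⟩ := hw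
      refine ⟨⟨v, rfl⟩, infix_snoc_out hinf ?_⟩
      rcases he with rfl | rfl
      · exact hxG v
      · exact hxC v
    · intro hw
      refine ⟨Base.G, Or.inl rfl, ?_⟩
      simp only [Spec, Finset.mem_filter] at hw ⊢
      exact ⟨hw.1, hw.2.trans (List.prefix_append _ _).isInfix⟩
  -- strong decodability = every primer has a private neighbour
  have hdec : ∀ (U' : Finset U),
      StronglyDecodableFam X U' p (fun _ => ({Base.G, Base.C} : Finset Base)) 1 ↔
      ∀ u ∈ U', ∃ v ∈ nbrs u, ∀ u' ∈ U', u' ≠ u → v ∉ nbrs u' := by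
    intro U'
    unfold StronglyDecodableFam
    constructor
    · intro h u hu
      obtain ⟨w, hw⟩ := Finset.card_pos.mp (h u hu)
      rw [Finset.mem_sdiff] at hw
      obtain ⟨v, hv, rfl⟩ := (hspec u w).1 hw.1
      refine ⟨v, hv, fun u' hu' hne hmem => ?_⟩
      apply hw.2
      rw [Finset.mem_biUnion]
      exact ⟨u', Finset.mem_erase.2 ⟨hne, hu'⟩, by
        rw [hspecE]; exact (hspec u' _).2 ⟨v, hmem, rfl⟩⟩
    · intro h u hu
      obtain ⟨v, hv, hpriv⟩ := h u hu
      rw [Finset.one_le_card]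
      refine ⟨x v, Finset.mem_sdiff.2 ⟨(hspec u _).2 ⟨v, hv, rfl⟩, ?_⟩⟩
      rw [Finset.mem_biUnion]
      rintro ⟨u', hu', hmem⟩
      rw [hspecE] at hmem
      obtain ⟨v', hv', heq⟩ := (hspec u' _).1 hmem
      rw [Finset.mem_erase] at hu'
      exact hpriv u' hu'.2 hu'.1 (hinj heq ▸ hv')
  -- equality of the two sets of achievable cardinalities
  congr 1
  ext k
  simp only [Set.mem_setOf_eq]
  constructor
  · rintro ⟨U', V', hU, hV, h1, h2⟩
    refine ⟨U', hU, (hdec U').2 ?_⟩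
    intro u hu
    obtain ⟨v, ⟨hvV, hvn⟩, -⟩ := h1 u hu
    refine ⟨v, hvn, fun u' hu' hne hmem => hne ?_⟩
    obtain ⟨u₀, -, huniq⟩ := h2 v hvV
    rw [huniq u' ⟨hu', hmem⟩, huniq u ⟨hu, hvn⟩]
  · rintro ⟨U', hU, hdec'⟩
    have h := (hdec U').1 hdec'
    choose f hf1 hf2 using h
    refine ⟨U', U'.attach.image (fun a => f a.1 a.2), hU, ?_, ?_, ?_⟩
    · rw [Finset.card_image_of_injOn, Finset.card_attach, hU]
      intro a _ b _ hab
      by_contra hne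
      have hne' : a.1 ≠ b.1 := fun h => hne (Subtype.ext h)
      have hab' : f a.1 a.2 = f b.1 b.2 := hab
      exact hf2 b.1 b.2 a.1 a.2 hne' (hab' ▸ hf1 a.1 a.2)
    · intro u hu
      refine ⟨f u hu, ⟨Finset.mem_image.2 ⟨⟨u, hu⟩, Finset.mem_attach _ _, rfl⟩,
        hf1 u hu⟩, ?_⟩
      rintro v ⟨hvV, hvn⟩
      obtain ⟨⟨u', hu'⟩, -, rfl⟩ := Finset.mem_image.1 hvV
      by_cases hne : u' = u
      · subst hne; rfl
      · exact absurd hvn (hf2 u' hu' u hu (Ne.symm hne))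
    · intro v hvV
      obtain ⟨⟨u₀, hu₀⟩, -, rfl⟩ := Finset.mem_image.1 hvV
      refine ⟨u₀, ⟨hu₀, hf1 u₀ hu₀⟩, ?_⟩
      rintro u ⟨hu, hvn⟩
      by_contra hne
      exact hf2 u₀ hu₀ u hu hne hvn
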